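/- For the stochastic two-queue tandem system with manufacturing blocking and intermediate buffer of capacity 0, suppose the sequences {τ_{i,n} : n = 1, 2, …}, i = 0, 1, 2, are mutually independent sequences of independent and identically distributed nonnegative random variables with finite means and finite variances. Then with probability one, lim_{n→∞} D_2(n)/n = max( E[τ_{0,1}], E[max(τ_{1,1}, τ_{2,1})] ). -/

import Mathlib

open MeasureTheory ProbabilityTheory Finset Filter

/-- Arrival epochs: `arr τ n = arr τ (n-1) + τ 0 n`, `arr τ 0 = 0`. -/
noncomputable def arr (τ : ℕ → ℕ → ℝ) : ℕ → ℝ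
  | 0 => 0
  | n + 1 => arr τ n + τ 0 (n + 1)

/-- Departure epochs `(D_1(n), D_2(n))` of the two-queue tandem system with
manufacturing blocking and intermediate buffer of capacity 0. -/
noncomputable def mb (τ : ℕ → ℕ → ℝ) : ℕ → ℝ × ℝ
  | 0 => (0, 0)
  | n + 1 =>
      let p := mb τ n
      let d1 := max (max (arr τ (n + 1)) p.1 + τ 1 (n + 1)) p.2
      (d1, max d1 p.2 + τ 2 (n + 1))

namespace MCTaux

lemma tendsto_nat_div_succ : Tendsto (fun n : ℕ => (n : ℝ) / (n + 1)) atTop (nhds 1) := by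
  have h : Tendsto (fun n : ℕ => 1 / ((n : ℝ) + 1)) atTop (nhds 0) := tendsto_one_div_add_atTop_nhds_zero_nat
  have := (tendsto_const_nhds (x := (1:ℝ)) (f := atTop)).sub h
  rw [sub_zero] at this
  refine this.congr fun n => ?_
  have hn : (n : ℝ) + 1 ≠ 0 := by positivity
  field_simp; ring

lemma div_succ_tendsto (u : ℕ → ℝ) (c : ℝ)
    (h : Tendsto (fun n : ℕ => u n / n) atTop (nhds c)) :
    Tendsto (fun n : ℕ => u n / ((n : ℝ) + 1)) atTop (nhds c) := by
  have := h.mul tendsto_nat_div_succ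
  rw [mul_one] at this
  refine this.congr' ?_
  filter_upwards [eventually_ge_atTop 1] with n hn
  have hn0 : (n : ℝ) ≠ 0 := by positivity
  have hn1 : (n : ℝ) + 1 ≠ 0 := by positivity
  field_simp

lemma bound_of_tendsto (u : ℕ → ℝ) (x ε : ℝ) (hε : 0 < ε)
    (h : Tendsto (fun n : ℕ => u n / n) atTop (nhds x)) :
    ∃ C : ℝ, 0 ≤ C ∧ ∀ n : ℕ, |u n - x * n| ≤ ε * n + C := by
  obtain ⟨N, hN⟩ := Metric.tendsto_atTop.1 h ε hε
  refine ⟨∑ k ∈ Finset.range (N + 1), |u k - x * k|,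
    Finset.sum_nonneg fun _ _ => abs_nonneg _, fun n => ?_⟩
  rcases le_or_gt n N with hn | hn
  · have h1 : |u n - x * n| ≤ ∑ k ∈ Finset.range (N + 1), |u k - x * k| :=
      Finset.single_le_sum (f := fun k => |u k - x * (k : ℝ)|)
        (fun _ _ => abs_nonneg _) (Finset.mem_range.2 (by omega))
    have h2 : (0:ℝ) ≤ ε * n := by positivity
    linarith
  · have hpos : (0:ℝ) < n := by
      have : 1 ≤ n := by omega
      exact_mod_cast Nat.lt_of_lt_of_le Nat.zero_lt_one this
    have hd := hN n (by omega)
    rw [Real.dist_eq] at hd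
    have h2 : |u n - x * n| = |u n / n - x| * n := by
      have he : (u n / n - x) * n = u n - x * n := by
        rw [sub_mul, div_mul_cancel₀ _ hpos.ne']
      rw [← he, abs_mul, abs_of_pos hpos]
    have h3 : |u n / n - x| * n ≤ ε * n :=
      mul_le_mul_of_nonneg_right hd.le hpos.le
    have h4 : (0:ℝ) ≤ ∑ k ∈ Finset.range (N + 1), |u k - x * k| :=
      Finset.sum_nonneg fun _ _ => abs_nonneg _
    rw [h2]
    linarith

lemma term_div_tendsto (y : ℕ → ℝ) (c : ℝ)
    (h : Tendsto (fun n : ℕ => (∑ i ∈ Finset.range n, y (i + 1)) / n) atTop (nhds c)) :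
    Tendsto (fun n : ℕ => y n / n) atTop (nhds 0) := by
  set S : ℕ → ℝ := fun n => ∑ i ∈ Finset.range n, y (i + 1) with hS
  have hshift : Tendsto (fun n : ℕ => S (n + 1) / ((n : ℝ) + 1)) atTop (nhds c) := by
    have := h.comp (tendsto_add_atTop_nat 1)
    refine this.congr fun n => ?_
    simp [Function.comp, hS]
  have hold : Tendsto (fun n : ℕ => S n / ((n : ℝ) + 1)) atTop (nhds c) :=
    div_succ_tendsto S c h
  have hdiff := hshift.sub hold
  rw [sub_self] at hdiff
  have key : Tendsto (fun n : ℕ => y (n + 1) / ((n : ℝ) + 1)) atTop (nhds 0) := by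
    refine hdiff.congr fun n => ?_
    have : S (n + 1) = S n + y (n + 1) := Finset.sum_range_succ _ _
    rw [this]
    ring
  exact (tendsto_add_atTop_iff_nat 1).1
    (Tendsto.congr (fun n => by push_cast; ring) key)


section Det

/-- Cumulative "blocking service" times. -/
noncomputable def Tm (t : ℕ → ℕ → ℝ) (n : ℕ) : ℝ :=
  ∑ j ∈ Finset.range n, max (t 1 (j + 2)) (t 2 (j + 1))

variable (t : ℕ → ℕ → ℝ)

lemma arr_eq_sum : ∀ n, arr t n = ∑ i ∈ Finset.range n, t 0 (i + 1)
  | 0 => by simp [arr]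
  | n + 1 => by rw [arr, arr_eq_sum n, Finset.sum_range_succ]

lemma mb_zero : mb t 0 = (0, 0) := rfl

lemma mb_fst_succ (n : ℕ) :
    (mb t (n + 1)).1 = max (max (arr t (n + 1)) (mb t n).1 + t 1 (n + 1)) (mb t n).2 := rfl

lemma mb_snd_le_fst_succ (n : ℕ) : (mb t n).2 ≤ (mb t (n + 1)).1 := by
  rw [mb_fst_succ]; exact le_max_right _ _

lemma mb_snd_succ (n : ℕ) : (mb t (n + 1)).2 = (mb t (n + 1)).1 + t 2 (n + 1) := by
  show max (mb t (n + 1)).1 (mb t n).2 + t 2 (n + 1) = _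
  rw [max_eq_left (mb_snd_le_fst_succ t n)]

variable (ht : ∀ i ≤ 2, ∀ n, 1 ≤ n → 0 ≤ t i n)
include ht

lemma arr_nonneg (n : ℕ) : 0 ≤ arr t n := by
  rw [arr_eq_sum]
  exact Finset.sum_nonneg fun i _ => ht 0 (by norm_num) (i + 1) (by omega)

lemma mb_nonneg : ∀ n, 0 ≤ (mb t n).1 ∧ 0 ≤ (mb t n).2
  | 0 => by simp [mb_zero]
  | n + 1 => by
      have h2 := (mb_nonneg n).2
      have h1 : 0 ≤ (mb t (n + 1)).1 := h2.trans (mb_snd_le_fst_succ t n)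
      refine ⟨h1, ?_⟩
      rw [mb_snd_succ]
      exact add_nonneg h1 (ht 2 le_rfl (n + 1) (by omega))

lemma mb_fst_one : (mb t 1).1 = arr t 1 + t 1 1 := by
  rw [mb_fst_succ, mb_zero]
  have h0 : max (arr t 1) 0 = arr t 1 := max_eq_left (arr_nonneg t ht 1)
  simp only [h0]
  exact max_eq_left (add_nonneg (arr_nonneg t ht 1) (ht 1 (by norm_num) 1 le_rfl))

omit ht in
lemma mb_rec (n : ℕ) :
    (mb t (n + 2)).1
      = max (arr t (n + 2) + t 1 (n + 2))
          ((mb t (n + 1)).1 + max (t 1 (n + 2)) (t 2 (n + 1))) := by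
  rw [mb_fst_succ t (n + 1), mb_snd_succ t n, ← max_add_add_right, max_assoc,
    max_add_add_left]

lemma lower_arr : ∀ n, arr t n ≤ (mb t n).2
  | 0 => by simp [mb_zero, arr]
  | n + 1 => by
      have h1 : arr t (n + 1) ≤ (mb t (n + 1)).1 := by
        rw [mb_fst_succ]
        refine le_trans ?_ (le_max_left _ _)
        have := ht 1 (by norm_num) (n + 1) (by omega)
        have := le_max_left (arr t (n + 1)) (mb t n).1
        linarith
      rw [mb_snd_succ]
      have := ht 2 le_rfl (n + 1) (by omega)
      linarith

lemma lower_T : ∀ n, Tm t n ≤ (mb t (n + 1)).1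
  | 0 => by simpa [Tm] using (mb_nonneg t ht 1).1
  | n + 1 => by
      rw [mb_rec t n]
      refine le_trans ?_ (le_max_right _ _)
      have := lower_T n
      rw [Tm, Finset.sum_range_succ, ← Tm]
      linarith

lemma upper_bound (α βm βp C : ℝ) (hC : 0 ≤ C) (hβ : βm ≤ βp)
    (H1 : ∀ k : ℕ, arr t (k + 1) + t 1 (k + 1) ≤ α * (k + 1) + C)
    (H2 : ∀ n : ℕ, βm * n - C ≤ Tm t n) :
    ∀ n : ℕ, (mb t (n + 1)).1 ≤ Tm t n + (max α βp - βm) * n + α + 2 * C := by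
  intro n
  induction n with
  | zero =>
      have h1 := H1 0
      have h2 := H2 0
      have hT0 : Tm t 0 = 0 := by simp [Tm]
      rw [mb_fst_one t ht]
      push_cast at h1 h2 ⊢
      rw [hT0] at h2 ⊢
      linarith
  | succ n ih =>
      rw [mb_rec t n]
      have hMα : α ≤ max α βp := le_max_left _ _
      have hMβ : βm ≤ max α βp := hβ.trans (le_max_right _ _)
      have hTsucc : Tm t (n + 1) = Tm t n + max (t 1 (n + 2)) (t 2 (n + 1)) := by
        rw [Tm, Finset.sum_range_succ, ← Tm]
      apply max_le
      · have h1 := H1 (n + 1)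
        have h2 := H2 (n + 1)
        have hmul : α * ((n : ℝ) + 1) ≤ max α βp * ((n : ℝ) + 1) :=
          mul_le_mul_of_nonneg_right hMα (by positivity)
        push_cast at h1 h2 ⊢
        nlinarith
      · have hmul : (max α βp - βm) * (n : ℝ) ≤ (max α βp - βm) * ((n : ℝ) + 1) := by
          nlinarith
        push_cast
        rw [hTsucc]
        push_cast at ih
        linarith


end Det


lemma shift_div (u : ℕ → ℝ) (c : ℝ)
    (h : Tendsto (fun n : ℕ => u n / n) atTop (nhds c)) :
    Tendsto (fun n : ℕ => u (n + 1) / ((n : ℝ) + 1)) atTop (nhds c) :=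
  (h.comp (tendsto_add_atTop_nat 1)).congr fun n => by
    simp [Function.comp]

lemma key (t : ℕ → ℕ → ℝ) (ht : ∀ i ≤ 2, ∀ n, 1 ≤ n → 0 ≤ t i n) (a b : ℝ)
    (h1 : Tendsto (fun n : ℕ => arr t n / n) atTop (nhds a))
    (h2 : Tendsto (fun n : ℕ => Tm t n / n) atTop (nhds b))
    (h3 : Tendsto (fun n : ℕ => t 1 n / n) atTop (nhds 0))
    (h4 : Tendsto (fun n : ℕ => t 2 n / n) atTop (nhds 0)) :
    Tendsto (fun n : ℕ => (mb t n).2 / n) atTop (nhds (max a b)) := by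
  have G : Tendsto (fun n : ℕ => (mb t (n + 1)).2 / ((n : ℝ) + 1)) atTop
      (nhds (max a b)) := by
    rw [tendsto_order]
    constructor
    · intro c hc
      have harr : Tendsto (fun n : ℕ => arr t (n + 1) / ((n : ℝ) + 1)) atTop (nhds a) :=
        shift_div _ a h1
      have hT : Tendsto (fun n : ℕ => Tm t n / ((n : ℝ) + 1)) atTop (nhds b) :=
        div_succ_tendsto _ b h2
      have hL := harr.max hT
      filter_upwards [(tendsto_order.1 hL).1 c hc] with n hn
      refine lt_of_lt_of_le hn ?_
      have hp : (0 : ℝ) < (n : ℝ) + 1 := by positivity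
      have hd12 : (mb t (n + 1)).1 ≤ (mb t (n + 1)).2 := by
        rw [mb_snd_succ]
        have := ht 2 le_rfl (n + 1) (by omega)
        linarith
      apply max_le
      · exact (div_le_div_iff_of_pos_right hp).2 (lower_arr t ht (n + 1))
      · exact (div_le_div_iff_of_pos_right hp).2 ((lower_T t ht n).trans hd12)
    · intro c hc
      have hε0 : 0 < (c - max a b) / 6 := by linarith
      set ε := (c - max a b) / 6 with hεdef
      obtain ⟨C1, hC1n, hC1⟩ := bound_of_tendsto _ a ε hε0 h1
      obtain ⟨C2, hC2n, hC2⟩ := bound_of_tendsto _ 0 ε hε0 h3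
      obtain ⟨C3, hC3n, hC3⟩ := bound_of_tendsto _ b ε hε0 h2
      have H1 : ∀ k : ℕ, arr t (k + 1) + t 1 (k + 1)
          ≤ (a + 2 * ε) * (k + 1) + (C1 + C2 + C3) := by
        intro k
        have ha := abs_le.1 (hC1 (k + 1))
        have hb := abs_le.1 (hC2 (k + 1))
        push_cast at ha hb ⊢
        nlinarith [ha.1, ha.2, hb.1, hb.2]
      have H2 : ∀ n : ℕ, (b - ε) * n - (C1 + C2 + C3) ≤ Tm t n := by
        intro n
        have hb := abs_le.1 (hC3 n)
        have hn : (0 : ℝ) ≤ n := Nat.cast_nonneg n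
        nlinarith [hb.1, hb.2]
      have H3 : ∀ n : ℕ, Tm t n ≤ (b + ε) * n + (C1 + C2 + C3) := by
        intro n
        have hb := abs_le.1 (hC3 n)
        have hn : (0 : ℝ) ≤ n := Nat.cast_nonneg n
        nlinarith [hb.1, hb.2]
      have hub := upper_bound t ht (a + 2 * ε) (b - ε) (b + ε) (C1 + C2 + C3)
        (by linarith) (by linarith) H1 H2
      set M := max (a + 2 * ε) (b + ε) with hMdef
      set K := (b + ε) + (M - (b - ε)) with hKdef
      set c0 := (a + 2 * ε) + 3 * (C1 + C2 + C3) with hc0def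
      have hptw : ∀ n : ℕ, (mb t (n + 1)).2 / ((n : ℝ) + 1)
          ≤ (K * n + c0) / ((n : ℝ) + 1) + t 2 (n + 1) / ((n : ℝ) + 1) := by
        intro n
        have hd := hub n
        have hT3 := H3 n
        have hp : (0 : ℝ) < (n : ℝ) + 1 := by positivity
        have hnum : (mb t (n + 1)).2 ≤ K * n + c0 + t 2 (n + 1) := by
          rw [mb_snd_succ]
          rw [hKdef, hc0def]
          nlinarith [hd, hT3]
        calc (mb t (n + 1)).2 / ((n : ℝ) + 1)
            ≤ (K * n + c0 + t 2 (n + 1)) / ((n : ℝ) + 1) :=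
              (div_le_div_iff_of_pos_right hp).2 hnum
          _ = (K * n + c0) / ((n : ℝ) + 1) + t 2 (n + 1) / ((n : ℝ) + 1) := by
              rw [add_div]
      have hR : Tendsto (fun n : ℕ => (K * n + c0) / ((n : ℝ) + 1)
          + t 2 (n + 1) / ((n : ℝ) + 1)) atTop (nhds (K + 0)) := by
        have hfrac : Tendsto (fun n : ℕ => (K * n + c0) / ((n : ℝ) + 1)) atTop (nhds K) := by
          have hlim : Tendsto (fun n : ℕ => K * ((n : ℝ) / (n + 1))
              + c0 * (1 / ((n : ℝ) + 1))) atTop (nhds (K * 1 + c0 * 0)) :=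
            ((tendsto_const_nhds.mul tendsto_nat_div_succ).add
              (tendsto_const_nhds.mul tendsto_one_div_add_atTop_nhds_zero_nat))
          rw [mul_one, mul_zero, add_zero] at hlim
          refine hlim.congr fun n => ?_
          have hp : ((n : ℝ) + 1) ≠ 0 := by positivity
          field_simp
        exact hfrac.add (shift_div _ 0 h4)
      have hlt : K + 0 < c := by
        have hM1 : M ≤ max a b + 2 * ε := by
          apply max_le
          · have := le_max_left a b; linarith
          · have := le_max_right a b; linarith
        have hc : c = max a b + 6 * ε := by rw [hεdef]; ring
        rw [hKdef]
        linarith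
      filter_upwards [(tendsto_order.1 hR).2 c hlt] with n hn
      exact lt_of_le_of_lt (hptw n) hn
  exact (tendsto_add_atTop_iff_nat 1).1
    (Tendsto.congr (fun n => by push_cast; ring) G)

lemma identDistrib_pair {Ω : Type*} [MeasurableSpace Ω] {μ : Measure Ω}
    [IsProbabilityMeasure μ] {X X' Y Y' : Ω → ℝ}
    (hX : IdentDistrib X X' μ μ) (hY : IdentDistrib Y Y' μ μ)
    (h : IndepFun X Y μ) (h' : IndepFun X' Y' μ) :
    IdentDistrib (fun ω => (X ω, Y ω)) (fun ω => (X' ω, Y' ω)) μ μ :=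
  ⟨hX.aemeasurable_fst.prodMk hY.aemeasurable_fst,
   hX.aemeasurable_snd.prodMk hY.aemeasurable_snd,
   by rw [(indepFun_iff_map_prod_eq_prod_map_map hX.aemeasurable_fst
        hY.aemeasurable_fst).1 h,
      (indepFun_iff_map_prod_eq_prod_map_map hX.aemeasurable_snd
        hY.aemeasurable_snd).1 h', hX.map_eq, hY.map_eq]⟩

end MCTaux

/-- **Mean cycle time under manufacturing blocking.** If the interarrival and
service times `τ i n`, `i = 0, 1, 2`, form mutually independent sequences of
i.i.d. nonnegative random variables with finite means and finite variances,
then with probability one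
`D_2(n)/n → max (E[τ 0 1]) (E[max (τ 1 1) (τ 2 1)])`. -/
theorem mean_cycle_time_manufacturing_blocking
    {Ω : Type*} [MeasurableSpace Ω] (μ : Measure Ω) [IsProbabilityMeasure μ]
    (τ : ℕ → ℕ → Ω → ℝ)
    (hpos : ∀ i ≤ 2, ∀ n, 1 ≤ n → ∀ ω, 0 ≤ τ i n ω)
    (hmeas : ∀ i ≤ 2, ∀ n, Measurable (τ i n))
    (hindep : iIndepFun
        (fun p : Fin 3 × ℕ => τ (p.1 : ℕ) (p.2 + 1)) μ)
    (hident : ∀ i ≤ 2, ∀ n, 1 ≤ n → IdentDistrib (τ i n) (τ i 1) μ μ)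
    (hint : ∀ i ≤ 2, Integrable (τ i 1) μ)
    (hvar : ∀ i ≤ 2, MemLp (τ i 1) 2 μ) :
    ∀ᵐ ω ∂μ, Tendsto (fun n : ℕ => (mb (fun i j => τ i j ω) n).2 / n) atTop
      (nhds (max (∫ ω, τ 0 1 ω ∂μ) (∫ ω, max (τ 1 1 ω) (τ 2 1 ω) ∂μ))) := by
  have hfmeas : ∀ p : Fin 3 × ℕ, Measurable fun ω => τ (p.1 : ℕ) (p.2 + 1) ω :=
    fun p => hmeas p.1 p.1.is_le (p.2 + 1)
  have hmax : Measurable fun q : ℝ × ℝ => max q.1 q.2 :=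
    measurable_fst.max measurable_snd
  -- strong law for each marginal sequence
  have slln : ∀ i : Fin 3, ∀ᵐ ω ∂μ, Tendsto
      (fun n : ℕ => (∑ k ∈ Finset.range n, τ (i : ℕ) (k + 1) ω) / n) atTop
      (nhds (∫ ω, τ (i : ℕ) 1 ω ∂μ)) := by
    intro i
    have h := strong_law_ae_real (fun k => τ (i : ℕ) (k + 1))
      (by simpa using hint (i : ℕ) i.is_le)
      (fun k l hkl => hindep.indepFun
        (show (i, k) ≠ (i, l) by simp [Prod.ext_iff, hkl]))
      (fun k => (hident (i : ℕ) i.is_le (k + 1) (by omega)).trans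
        (hident (i : ℕ) i.is_le 1 le_rfl).symm)
    simpa using h
  -- strong law for the blocking service times
  have id1 : ∀ k : ℕ, 1 ≤ k → IdentDistrib (τ 1 k) (τ 1 2) μ μ := fun k hk =>
    (hident 1 (by norm_num) k hk).trans (hident 1 (by norm_num) 2 (by norm_num)).symm
  have id2 : ∀ k : ℕ, 1 ≤ k → IdentDistrib (τ 2 k) (τ 2 1) μ μ := fun k hk =>
    hident 2 le_rfl k hk
  have ne12 : ∀ k l : ℕ, ((1 : Fin 3), k) ≠ ((2 : Fin 3), l) := by
    intro k l
    simp [Prod.ext_iff]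
  have hin : ∀ i : ℕ, IndepFun (τ 1 (i + 2)) (τ 2 (i + 1)) μ :=
    fun i => hindep.indepFun (ne12 (i + 1) i)
  have hpairid : ∀ i : ℕ, IdentDistrib
      (fun ω => (τ 1 (i + 2) ω, τ 2 (i + 1) ω))
      (fun ω => (τ 1 2 ω, τ 2 1 ω)) μ μ := by
    intro i
    exact MCTaux.identDistrib_pair (id1 (i + 2) (by omega)) (id2 (i + 1) (by omega))
      (hin i) (hin 0)
  have hXid : ∀ i : ℕ, IdentDistrib
      (fun ω => max (τ 1 (i + 2) ω) (τ 2 (i + 1) ω))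
      (fun ω => max (τ 1 2 ω) (τ 2 1 ω)) μ μ :=
    fun i => (hpairid i).comp hmax
  have hXindep : Pairwise (Function.onFun (IndepFun · · μ)
      fun i : ℕ => fun ω => max (τ 1 (i + 2) ω) (τ 2 (i + 1) ω)) := by
    intro i j hij
    exact (hindep.indepFun_prodMk_prodMk hfmeas (1, i + 1) (2, i) (1, j + 1) (2, j)
      (by simp [Prod.ext_iff]; omega) (ne12 (i + 1) j)
      (ne12 (j + 1) i).symm (by simp [Prod.ext_iff]; omega)).comp
      hmax hmax
  have hint12 : Integrable (τ 1 2) μ :=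
    ((hident 1 (by norm_num) 2 (by norm_num)).integrable_iff).2 (hint 1 (by norm_num))
  have hXint : Integrable (fun ω => max (τ 1 2 ω) (τ 2 1 ω)) μ :=
    hint12.sup (hint 2 le_rfl)
  have hXmean : (∫ ω, max (τ 1 2 ω) (τ 2 1 ω) ∂μ)
      = ∫ ω, max (τ 1 1 ω) (τ 2 1 ω) ∂μ := by
    have hpid : IdentDistrib (fun ω => (τ 1 2 ω, τ 2 1 ω))
        (fun ω => (τ 1 1 ω, τ 2 1 ω)) μ μ :=
      MCTaux.identDistrib_pair (hident 1 (by norm_num) 2 (by norm_num))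
        (IdentDistrib.refl (hmeas 2 le_rfl 1).aemeasurable)
        (hin 0) (hindep.indepFun (ne12 0 0))
    exact (hpid.comp hmax).integral_eq
  have sllnsig : ∀ᵐ ω ∂μ, Tendsto
      (fun n : ℕ => (∑ k ∈ Finset.range n, max (τ 1 (k + 2) ω) (τ 2 (k + 1) ω)) / n)
      atTop (nhds (∫ ω, max (τ 1 1 ω) (τ 2 1 ω) ∂μ)) := by
    have h := strong_law_ae_real
      (fun i : ℕ => fun ω => max (τ 1 (i + 2) ω) (τ 2 (i + 1) ω))
      (by simpa using hXint) hXindep (fun i => by simpa using hXid i)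
    rw [show (μ[fun ω => max (τ 1 (0 + 2) ω) (τ 2 (0 + 1) ω)])
      = ∫ ω, max (τ 1 1 ω) (τ 2 1 ω) ∂μ by simpa using hXmean] at h
    exact h
  filter_upwards [slln 0, slln 1, slln 2, sllnsig] with ω hw0 hw1 hw2 hws
  have ht : ∀ i ≤ 2, ∀ n, 1 ≤ n → 0 ≤ (fun i j => τ i j ω) i n :=
    fun i hi n hn => hpos i hi n hn ω
  refine MCTaux.key _ ht _ _ ?_ ?_ ?_ ?_
  · exact hw0.congr fun n => by rw [MCTaux.arr_eq_sum]; rfl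
  · exact hws
  · exact MCTaux.term_div_tendsto (fun k => τ 1 k ω) _ hw1
  · exact MCTaux.term_div_tendsto (fun k => τ 2 k ω) _ hw2
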